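/- For all integers l ≥ 2 and m ≥ 2, the polynomial F_{l,m} = (y^{l-1}·z − x^l)^m − x^{l·m−1}·y in ℂ[x,y,z] is homogeneous of degree l·m and is irreducible in ℂ[x,y,z]. -/

import Mathlib

set_option maxHeartbeats 1000000
set_option synthInstance.maxHeartbeats 400000

section Kummer

open Polynomial

universe u

theorem my_X_pow_sub_C_irreducible {K : Type u} [Field K] {m : ℕ} (hm : 0 < m) {a : K}
    (ha : ∀ d : ℕ, 0 < d → d < m → ∀ u : K, u ^ m ≠ a ^ d) :
    Irreducible (X ^ m - C a) := by
  have hne := X_pow_sub_C_ne_zero hm a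
  have notunit : ¬ IsUnit (X ^ m - C a) := by
    rw [Polynomial.isUnit_iff_degree_eq_zero, degree_X_pow_sub_C hm, Nat.cast_eq_zero]
    omega
  have ⟨g, hg, hg'⟩ := WfDvdMonoid.exists_irreducible_factor notunit hne
  suffices natDegree g = m from (associated_of_dvd_of_natDegree_le hg' hne
    (this.trans natDegree_X_pow_sub_C.symm).ge).irreducible hg
  by_contra h
  have : Fact (Irreducible g) := ⟨hg⟩
  have key : (Algebra.norm K (AdjoinRoot.root g)) ^ m = a ^ g.natDegree := by
    have := eval₂_eq_zero_of_dvd_of_eval₂_eq_zero _ _ hg' (AdjoinRoot.eval₂_root g)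
    rw [eval₂_sub, eval₂_pow, eval₂_C, eval₂_X, sub_eq_zero] at this
    rw [← map_pow, this, ← AdjoinRoot.algebraMap_eq, Algebra.norm_algebraMap,
      ← IntermediateField.finrank_top', ← IntermediateField.adjoin_root_eq_top g,
      IntermediateField.adjoin.finrank,
      AdjoinRoot.minpoly_root hg.ne_zero, natDegree_mul_C]
    · simpa using hg.ne_zero
    · exact AdjoinRoot.isIntegral_root hg.ne_zero
  have hd0 : 0 < g.natDegree := natDegree_pos_iff_degree_pos.mpr (degree_pos_of_irreducible hg)
  have hdm : g.natDegree ≤ m := (natDegree_le_of_dvd hg' hne).trans_eq natDegree_X_pow_sub_C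
  exact ha _ hd0 (lt_of_le_of_ne hdm h) _ key


end Kummer

open MvPolynomial

/-- The polynomial `F_{l,m} = (y^{l-1}·z − x^l)^m − x^{l·m−1}·y` in `ℂ[x,y,z]`,
with variables `x = X 0`, `y = X 1`, `z = X 2`. -/
noncomputable def Fpoly (l m : ℕ) : MvPolynomial (Fin 3) ℂ :=
  (X 1 ^ (l - 1) * X 2 - X 0 ^ l) ^ m - X 0 ^ (l * m - 1) * X 1

namespace FplAux

abbrev R : Type := MvPolynomial (Fin 2) ℂ
abbrev K : Type := FractionRing R

open MvPolynomial

lemma prime_x : Prime (MvPolynomial.X 0 : R) := by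
  have := MulEquiv.prime_iff (MvPolynomial.finSuccEquiv ℂ 1).toMulEquiv (p := (MvPolynomial.X 0 : R))
  rw [← this]
  simpa [MvPolynomial.finSuccEquiv_X_zero] using Polynomial.prime_X

lemma not_x_dvd_y : ¬ (MvPolynomial.X 0 : R) ∣ MvPolynomial.X 1 := by
  rintro ⟨c, hc⟩
  have := congrArg (MvPolynomial.eval (fun i : Fin 2 => if i = 0 then (0 : ℂ) else 1)) hc
  simp at this

lemma coprime_lm (l m : ℕ) (hl : 2 ≤ l) (hm : 2 ≤ m) : Nat.Coprime m (l * m - 1) := by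
  have h1 : Nat.gcd m (l * m - 1) ∣ l * m := (Nat.gcd_dvd_left _ _).mul_left l
  have h2 := Nat.gcd_dvd_right m (l * m - 1)
  have h3 := Nat.dvd_sub h1 h2
  have h4 : l * m - (l * m - 1) = 1 := by
    have : 1 ≤ l * m := by nlinarith
    omega
  rw [h4] at h3
  exact Nat.dvd_one.mp h3

/-- the key arithmetic fact: γ^d is not an m-th power in K for 0 < d < m -/
lemma not_pow (l m : ℕ) (hl : 2 ≤ l) (hm : 2 ≤ m) (d : ℕ) (hd0 : 0 < d) (hdm : d < m)
    (u : K) :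
    u ^ m ≠ (algebraMap R K (MvPolynomial.X 0 ^ (l * m - 1) * MvPolynomial.X 1) /
      (algebraMap R K (MvPolynomial.X 1 ^ (l - 1))) ^ m) ^ d := by
  intro hequ
  set φ := algebraMap R K with hφ
  have hinj : Function.Injective φ := IsFractionRing.injective R K
  set A : R := MvPolynomial.X 1 ^ (l - 1) with hA
  set D : R := MvPolynomial.X 0 ^ (l * m - 1) * MvPolynomial.X 1 with hD
  have hA0 : A ≠ 0 := pow_ne_zero _ (MvPolynomial.X_ne_zero 1)
  have hD0 : D ≠ 0 := mul_ne_zero (pow_ne_zero _ (MvPolynomial.X_ne_zero 0)) (MvPolynomial.X_ne_zero 1)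
  have hφA : φ A ≠ 0 := fun h => hA0 (hinj (by simpa using h))
  have hφD : φ D ≠ 0 := fun h => hD0 (hinj (by simpa using h))
  obtain ⟨p, q, hq, hu⟩ := IsFractionRing.div_surjective (A := R) u
  have hq0 : q ≠ 0 := nonZeroDivisors.ne_zero hq
  have hφq : φ q ≠ 0 := fun h => hq0 (hinj (by simpa using h))
  rw [← hu, div_pow, div_pow, ← pow_mul,
      div_eq_div_iff (pow_ne_zero _ hφq) (pow_ne_zero _ hφA)] at hequ
  -- hequ : φ p ^ m * (φ A ^ (m*d)) = φ D ^ d * φ q ^ m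
  have hE : p ^ m * A ^ (m * d) = D ^ d * q ^ m := by
    apply hinj
    push_cast [map_mul, map_pow]
    simpa [map_mul, map_pow] using hequ
  have hp0 : p ≠ 0 := by
    rintro rfl
    rw [zero_pow (by omega), zero_mul] at hE
    exact (mul_ne_zero (pow_ne_zero _ hD0) (pow_ne_zero _ hq0)) hE.symm
  -- multiplicity counting at the prime X 0
  have hx := prime_x
  have e1 : emultiplicity (MvPolynomial.X 0 : R) (MvPolynomial.X 1) = 0 :=
    emultiplicity_eq_zero.mpr not_x_dvd_y
  have ex : emultiplicity (MvPolynomial.X 0 : R) (MvPolynomial.X 0) = 1 :=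
    (FiniteMultiplicity.of_prime_left hx hx.ne_zero).emultiplicity_self
  have fp := FiniteMultiplicity.of_prime_left hx hp0
  have fq := FiniteMultiplicity.of_prime_left hx hq0
  have hcount := congrArg (emultiplicity (MvPolynomial.X 0 : R)) hE
  have c1 : emultiplicity (MvPolynomial.X 0 : R) (p ^ m)
      = m * (multiplicity (MvPolynomial.X 0 : R) p : ℕ∞) := by
    rw [emultiplicity_pow hx, fp.emultiplicity_eq_multiplicity]
  have c4 : emultiplicity (MvPolynomial.X 0 : R) (q ^ m)
      = m * (multiplicity (MvPolynomial.X 0 : R) q : ℕ∞) := by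
    rw [emultiplicity_pow hx, fq.emultiplicity_eq_multiplicity]
  have c2 : emultiplicity (MvPolynomial.X 0 : R) (A ^ (m * d)) = 0 := by
    refine emultiplicity_eq_zero.mpr (fun hdvd => not_x_dvd_y ?_)
    exact hx.dvd_of_dvd_pow (hx.dvd_of_dvd_pow hdvd)
  have c3 : emultiplicity (MvPolynomial.X 0 : R) (D ^ d) = (d : ℕ∞) * (l * m - 1 : ℕ) := by
    rw [emultiplicity_pow hx, hD, emultiplicity_mul hx, e1,
      emultiplicity_pow_self_of_prime hx, add_zero]
  rw [emultiplicity_mul hx, emultiplicity_mul hx, c1, c2, c3, c4, add_zero] at hcount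
  -- now a computation in ℕ∞
  have hnat : m * multiplicity (MvPolynomial.X 0 : R) p
      = d * (l * m - 1) + m * multiplicity (MvPolynomial.X 0 : R) q := by
    exact_mod_cast hcount
  have hdvd : m ∣ d * (l * m - 1) := by
    have h5 : d * (l * m - 1) = m * multiplicity (MvPolynomial.X 0 : R) p
        - m * multiplicity (MvPolynomial.X 0 : R) q := by omega
    rw [h5]
    exact Nat.dvd_sub (Dvd.intro _ rfl) (Dvd.intro _ rfl)
  have hcop : Nat.Coprime m (l * m - 1) := coprime_lm l m hl hm
  have := Nat.le_of_dvd hd0 (hcop.dvd_of_dvd_mul_right hdvd)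
  omega



noncomputable def Φ : MvPolynomial (Fin 3) ℂ ≃ₐ[ℂ] Polynomial R :=
  (MvPolynomial.renameEquiv ℂ finSuccEquivLast).trans (MvPolynomial.optionEquivLeft ℂ (Fin 2))

lemma Φ_X0 : Φ (MvPolynomial.X 0) = Polynomial.C (MvPolynomial.X 0) := by
  have h : finSuccEquivLast (0 : Fin 3) = some (0 : Fin 2) := rfl
  simp [Φ, rename_X, h, optionEquivLeft_X_some]

lemma Φ_X1 : Φ (MvPolynomial.X 1) = Polynomial.C (MvPolynomial.X 1) := by
  have h : finSuccEquivLast (1 : Fin 3) = some (1 : Fin 2) := rfl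
  simp [Φ, rename_X, h, optionEquivLeft_X_some]

lemma Φ_X2 : Φ (MvPolynomial.X 2) = Polynomial.X := by
  have h : finSuccEquivLast (2 : Fin 3) = none := rfl
  simp [Φ, rename_X, h, optionEquivLeft_X_none]

/-- the image of `Fpoly` -/
noncomputable def P (l m : ℕ) : Polynomial R :=
  (Polynomial.C ((MvPolynomial.X 1 : R) ^ (l - 1)) * Polynomial.X - Polynomial.C ((MvPolynomial.X 0 : R) ^ l)) ^ m
    - Polynomial.C ((MvPolynomial.X 0 : R) ^ (l * m - 1) * MvPolynomial.X 1)

lemma Φ_F (l m : ℕ) : Φ (Fpoly l m) = P l m := by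
  simp only [Fpoly, P, map_sub, map_mul, map_pow, Φ_X0, Φ_X1, Φ_X2]

lemma hprim (l m : ℕ) (hl : 2 ≤ l) (hm : 2 ≤ m) : (P l m).IsPrimitive := by
  set A : R := (MvPolynomial.X 1 : R) ^ (l - 1) with hA
  set B : R := (MvPolynomial.X 0 : R) ^ l with hB
  set D : R := (MvPolynomial.X 0 : R) ^ (l * m - 1) * MvPolynomial.X 1 with hD
  have hA0 : A ≠ 0 := pow_ne_zero _ (MvPolynomial.X_ne_zero 1)
  set Q : Polynomial R := Polynomial.C A * Polynomial.X - Polynomial.C B with hQdef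
  have hQ : Q = Polynomial.C A * Polynomial.X + Polynomial.C (-B) := by rw [map_neg]; ring
  have hQnd : Q.natDegree = 1 := by rw [hQ]; exact Polynomial.natDegree_linear hA0
  have hQlc : Q.leadingCoeff = A := by rw [hQ]; exact Polynomial.leadingCoeff_linear hA0
  have hpow_nd : (Q ^ m).natDegree = m := by
    rw [Polynomial.natDegree_pow, hQnd, mul_one]
  have hcoeffm : (P l m).coeff m = A ^ m := by
    rw [P, Polynomial.coeff_sub, Polynomial.coeff_C, if_neg (by omega : ¬ m = 0), sub_zero]
    have h1 : (Q ^ m).coeff m = (Q ^ m).leadingCoeff := by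
      rw [Polynomial.leadingCoeff, hpow_nd]
    rw [← hQdef, h1, Polynomial.leadingCoeff_pow, hQlc]
  have hcoeff0 : (P l m).coeff 0 = (-B) ^ m - D := by
    rw [P, Polynomial.coeff_sub, ← hQdef, Polynomial.coeff_zero_eq_eval_zero,
      Polynomial.coeff_zero_eq_eval_zero]
    simp [hQdef, hD]
  intro r hr
  rw [Polynomial.C_dvd_iff_dvd_coeff] at hr
  by_contra hru
  have hrm := hr m; rw [hcoeffm] at hrm
  have hr00 := hr 0; rw [hcoeff0] at hr00
  have hr0 : r ≠ 0 := by
    rintro rfl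
    exact (pow_ne_zero m hA0) (zero_dvd_iff.mp hrm)
  obtain ⟨i, hi, hidvd⟩ := WfDvdMonoid.exists_irreducible_factor hru hr0
  have hip : Prime i := UniqueFactorizationMonoid.irreducible_iff_prime.mp hi
  have h1 : i ∣ (MvPolynomial.X 1 : R) := by
    have : i ∣ A ^ m := hidvd.trans hrm
    exact hip.dvd_of_dvd_pow (hip.dvd_of_dvd_pow this)
  have h0 : i ∣ (MvPolynomial.X 0 : R) := by
    have h2 : i ∣ (-B) ^ m - D := hidvd.trans hr00
    have h3 : i ∣ D := dvd_mul_of_dvd_right h1 _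
    have h4 : i ∣ (-B) ^ m := by
      have := dvd_add h2 h3
      simpa using this
    have h5 := hip.dvd_of_dvd_pow h4
    rw [dvd_neg] at h5
    exact hip.dvd_of_dvd_pow h5
  exact not_x_dvd_y ((hi.associated_of_dvd prime_x.irreducible h0).symm.dvd.trans h1)

lemma irr_P (l m : ℕ) (hl : 2 ≤ l) (hm : 2 ≤ m) : Irreducible (P l m) := by
  letI : StrongNormalizationMonoid R := UniqueFactorizationMonoid.strongNormalizationMonoid
  letI : NormalizedGCDMonoid R := UniqueFactorizationMonoid.toNormalizedGCDMonoid R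
  rw [(hprim l m hl hm).irreducible_iff_irreducible_map_fraction_map (K := K)]
  set φ := algebraMap R K with hφ
  set a : K := φ (MvPolynomial.X 1 ^ (l - 1)) with ha'
  set b : K := φ (MvPolynomial.X 0 ^ l) with hb'
  set dd : K := φ (MvPolynomial.X 0 ^ (l * m - 1) * MvPolynomial.X 1) with hdd'
  have hA0 : (MvPolynomial.X 1 ^ (l - 1) : R) ≠ 0 := pow_ne_zero _ (MvPolynomial.X_ne_zero 1)
  have ha : a ≠ 0 := fun h =>
    hA0 ((IsFractionRing.injective R K) (by rw [map_zero]; exact h))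
  have hmap : (P l m).map φ
      = (Polynomial.C a * Polynomial.X - Polynomial.C b) ^ m - Polynomial.C dd := by
    simp only [P, Polynomial.map_sub, Polynomial.map_pow, Polynomial.map_mul,
      Polynomial.map_C, Polynomial.map_X, ha', hb', hdd']
  set β : K := b / a with hβ
  set γ : K := dd / a ^ m with hγdef
  have hb : a * β = b := by rw [hβ, mul_comm]; exact div_mul_cancel₀ b ha
  have hg : a ^ m * γ = dd := by
    rw [hγdef, mul_comm]; exact div_mul_cancel₀ dd (pow_ne_zero m ha)
  have key1 : (P l m).map φ
      = Polynomial.C (a ^ m) * ((Polynomial.X - Polynomial.C β) ^ m - Polynomial.C γ) := by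
    rw [hmap, ← hb, ← hg, Polynomial.C_mul, Polynomial.C_mul, Polynomial.C_pow,
      ← mul_sub (α := Polynomial K) (Polynomial.C a), mul_pow (M := Polynomial K),
      mul_sub (α := Polynomial K)]
  have hγ : Irreducible (Polynomial.X ^ m - Polynomial.C γ) := by
    apply my_X_pow_sub_C_irreducible (by omega : 0 < m)
    intro d hd0 hdm u
    exact not_pow l m hl hm d hd0 hdm u
  have htrans : Irreducible ((Polynomial.X - Polynomial.C β) ^ m - Polynomial.C γ) := by
    have h2 : (Polynomial.algEquivAevalXAddC (-β)) (Polynomial.X ^ m - Polynomial.C γ)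
        = (Polynomial.X - Polynomial.C β) ^ m - Polynomial.C γ := by
      simp only [Polynomial.algEquivAevalXAddC_apply, map_sub, map_pow,
        Polynomial.aeval_X, Polynomial.aeval_C, Polynomial.algebraMap_eq, map_neg,
        ← sub_eq_add_neg]
    rw [← h2]
    exact (MulEquiv.irreducible_iff
      (Polynomial.algEquivAevalXAddC (-β)).toMulEquiv).mpr hγ
  have hunit : IsUnit (Polynomial.C (a ^ m) : Polynomial K) :=
    Polynomial.isUnit_C.mpr (isUnit_iff_ne_zero.mpr (pow_ne_zero m ha))
  have hassoc := associated_unit_mul_right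
    ((Polynomial.X - Polynomial.C β) ^ m - Polynomial.C γ) (Polynomial.C (a ^ m)) hunit
  rw [← key1] at hassoc
  exact hassoc.irreducible htrans

lemma hom (l m : ℕ) (hl : 2 ≤ l) (hm : 2 ≤ m) :
    (Fpoly l m).IsHomogeneous (l * m) := by
  have e1 : 1 * (l - 1) + 1 = l := by omega
  have e2 : 1 * l = l := one_mul l
  have e4 : 1 * (l * m - 1) + 1 = l * m := by
    have : 2 ≤ l * m := by nlinarith
    omega
  have h1 := ((MvPolynomial.isHomogeneous_X ℂ (1 : Fin 3)).pow (l - 1)).mul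
    (MvPolynomial.isHomogeneous_X ℂ (2 : Fin 3))
  rw [e1] at h1
  have h2 := (MvPolynomial.isHomogeneous_X ℂ (0 : Fin 3)).pow l
  rw [e2] at h2
  have h3 := ((MvPolynomial.isHomogeneous_X ℂ (0 : Fin 3)).pow (l * m - 1)).mul
    (MvPolynomial.isHomogeneous_X ℂ (1 : Fin 3))
  rw [e4] at h3
  exact ((h1.sub h2).pow m).sub h3

end FplAux

theorem stmt_0 (l m : ℕ) (hl : 2 ≤ l) (hm : 2 ≤ m) :
    (Fpoly l m).IsHomogeneous (l * m) ∧ Irreducible (Fpoly l m) := by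
  refine ⟨FplAux.hom l m hl hm, ?_⟩
  rw [← MulEquiv.irreducible_iff FplAux.Φ, FplAux.Φ_F]
  exact FplAux.irr_P l m hl hm
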